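/- Let U be an N×N real matrix (N ≥ 2) such that for all i < j, U_{ii} > U_{ji} > U_{jj} > U_{ij}. Then there exists ᾱ ∈ (0,1) such that for every α with ᾱ < α ≤ 1, the profile (0,0) is the unique pure Nash equilibrium of the two-player game in which agent 1's utility at (i,j) is (1−α)U_{ij} + αU_{ji} and agent 2's payoff at (i,j) is U_{ji}. In particular, for such α every diagonal profile (j,j) with j ≠ 0 is destroyed because agent 1 strictly gains by deviating to strategy 0. -/

import Mathlib

/-- Let `U` be an `N×N` real matrix (`N ≥ 2`) with, for all `i < j`,
`U i i > U j i > U j j > U i j`. Then there exists `ᾱ ∈ (0,1)` such that for every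
`α` with `ᾱ < α ≤ 1` the profile `(0,0)` is the unique pure Nash equilibrium of the
game in which agent 1's utility at `(i,j)` is `(1−α)·U i j + α·U j i` and agent 2's
payoff at `(i,j)` is `U j i`: a profile `(i,j)` satisfies both agents' Nash conditions
iff `i = 0 ∧ j = 0`. In particular every diagonal profile `(j,j)` with `j ≠ 0` is
destroyed because agent 1 strictly gains by deviating to strategy `0`. -/
theorem stag_hunt_matrix_unique_nash_for_high_prosociality
    (N : ℕ) (hN : 2 ≤ N) (U : Fin N → Fin N → ℝ)
    (hSH : ∀ i j : Fin N, i < j → U i i > U j i ∧ U j i > U j j ∧ U j j > U i j) :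
    ∃ abar : ℝ, 0 < abar ∧ abar < 1 ∧ ∀ α : ℝ, abar < α → α ≤ 1 →
      (∀ i j : Fin N,
        ((∀ i' : Fin N, (1 - α) * U i' j + α * U j i' ≤ (1 - α) * U i j + α * U j i)
          ∧ (∀ j' : Fin N, U j' i ≤ U j i))
        ↔ (i = ⟨0, by omega⟩ ∧ j = ⟨0, by omega⟩))
      ∧ (∀ j : Fin N, j ≠ ⟨0, by omega⟩ →
          (1 - α) * U ⟨0, by omega⟩ j + α * U j ⟨0, by omega⟩ > U j j) := by
  have hNpos : 0 < N := by omega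
  set z : Fin N := ⟨0, hNpos⟩ with hz
  have hzlt : ∀ i : Fin N, i ≠ z → z < i := by
    intro i hi
    have hv : i.val ≠ 0 := fun h => hi (Fin.ext h)
    exact Fin.lt_def.mpr (by simp [hz]; omega)
  have key : ∀ i j : Fin N, j ≠ i → U j i < U i i := by
    intro i j hne
    rcases lt_or_gt_of_ne hne with h | h
    · exact (hSH j i h).2.2
    · exact (hSH i j h).1
  have hden : ∀ i : Fin N, i ≠ z → 0 < U i z - U z i := by
    intro i hi
    have h := hSH z i (hzlt i hi)
    linarith [h.2.1, h.2.2]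
  have hnum : ∀ i : Fin N, i ≠ z → U i i - U z i < U i z - U z i := by
    intro i hi
    have h := hSH z i (hzlt i hi)
    linarith [h.2.1]
  haveI : Nonempty (Fin N) := ⟨z⟩
  set f : Fin N → ℝ := fun i => if i = z then (1:ℝ)/2
    else max ((1:ℝ)/2) ((U i i - U z i)/(U i z - U z i)) with hf
  have hhalf : (1:ℝ)/2 ≤ Finset.univ.sup' Finset.univ_nonempty f := by
    have h := Finset.le_sup' f (Finset.mem_univ z)
    exact le_trans (le_of_eq (by simp [hf])) h
  refine ⟨Finset.univ.sup' Finset.univ_nonempty f, by linarith, ?_, ?_⟩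
  · rw [Finset.sup'_lt_iff]
    intro i _
    by_cases hi : i = z
    · simp [hf, hi]; norm_num
    · simp only [hf, hi, if_false]
      rw [max_lt_iff]
      constructor
      · norm_num
      · rw [div_lt_one (hden i hi)]
        linarith [hnum i hi]
  · intro α hα hα1
    have hαpos : (0:ℝ) < α := by linarith
    have hdev : ∀ j : Fin N, j ≠ z → (1-α) * U z j + α * U j z > U j j := by
      intro j hj
      have h1 : f j ≤ Finset.univ.sup' Finset.univ_nonempty f :=
        Finset.le_sup' f (Finset.mem_univ j)
      have h2 : (U j j - U z j)/(U j z - U z j) < α := by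
        have h3 : (U j j - U z j)/(U j z - U z j) ≤ f j := by
          simp [hf, hj]
        linarith
      rw [div_lt_iff₀ (hden j hj)] at h2
      nlinarith
    refine ⟨?_, hdev⟩
    intro i j
    constructor
    · rintro ⟨h1, h2⟩
      have hji : j = i := by
        by_contra hne
        exact absurd (h2 i) (not_le.mpr (key i j hne))
      subst hji
      have hiz : j = z := by
        by_contra hne
        have hd := hdev j hne
        have ha := h1 z
        nlinarith
      exact ⟨hiz, hiz⟩
    · rintro ⟨rfl, rfl⟩
      constructor
      · intro i'
        by_cases hi : i' = z
        · subst hi; exact le_refl _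
        · have h := hSH z i' (hzlt i' hi)
          have h1 : U i' z < U z z := h.1
          have h2 : U z i' < U z z := by linarith [h.1, h.2.1, h.2.2]
          nlinarith
      · intro j'
        by_cases hj : j' = z
        · subst hj; exact le_refl _
        · exact le_of_lt (key z j' hj)
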